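/- arXiv:2111.11006 — 5 statements merged into one kernel-verified Lean document; each statement's English description precedes it below -/
import Mathlib

section
/- Let G₁ be a simple connected graph with n₁ vertices and m₁ edges, and G₂ a simple connected graph with n₂ vertices and m₂ edges. Then the forgotten topological index of the corona join product satisfies F(G₁ ⊕ G₂) = F(G₁) + n₁·F(G₂) + 3n₁n₂·M₁(G₁) + 3n₁²·M₁(G₂) + 6m₁n₁²n₂² + 6m₂n₁³ + n₁⁴n₂(n₂² + 1). -/
open Finset

/-- Corona join product `G₁ ⊕ G₂`: one copy of `G₁` together with one copy of `G₂` for each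
vertex of `G₁`, where every vertex of every copy of `G₂` is joined to every vertex of `G₁`. -/
def coronaJoin {V₁ V₂ : Type*} (G₁ : SimpleGraph V₁) (G₂ : SimpleGraph V₂) :
    SimpleGraph (V₁ ⊕ V₁ × V₂) where
  Adj x y :=
    match x, y with
    | Sum.inl u, Sum.inl v => G₁.Adj u v
    | Sum.inl _, Sum.inr _ => True
    | Sum.inr _, Sum.inl _ => True
    | Sum.inr (i, u), Sum.inr (j, v) => i = j ∧ G₂.Adj u v
  symm := by
    constructor
    rintro (u | ⟨i, u⟩) (v | ⟨j, v⟩) h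
    · exact h.symm
    · trivial
    · trivial
    · exact ⟨h.1.symm, h.2.symm⟩
  loopless := by
    constructor
    rintro (u | ⟨i, u⟩) h
    · exact G₁.loopless.irrefl u h
    · exact G₂.loopless.irrefl u h.2

instance coronaJoin.adjDecidable {V₁ V₂ : Type*} (G₁ : SimpleGraph V₁) (G₂ : SimpleGraph V₂)
    [DecidableEq V₁] [DecidableRel G₁.Adj] [DecidableRel G₂.Adj] :
    DecidableRel (coronaJoin G₁ G₂).Adj
  | Sum.inl u, Sum.inl v => inferInstanceAs (Decidable (G₁.Adj u v))
  | Sum.inl _, Sum.inr _ => inferInstanceAs (Decidable True)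
  | Sum.inr _, Sum.inl _ => inferInstanceAs (Decidable True)
  | Sum.inr (i, u), Sum.inr (j, v) => inferInstanceAs (Decidable (i = j ∧ G₂.Adj u v))

/-- First Zagreb index `M₁(G) = ∑ v, d(v)²`. -/
def firstZagreb {V : Type*} [Fintype V] (G : SimpleGraph V) [DecidableRel G.Adj] : ℤ :=
  ∑ v, (G.degree v : ℤ) ^ 2

/-- Forgotten topological index `F(G) = ∑ v, d(v)³`. -/
def forgottenIndex {V : Type*} [Fintype V] (G : SimpleGraph V) [DecidableRel G.Adj] : ℤ :=
  ∑ v, (G.degree v : ℤ) ^ 3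

/-- First hyper Zagreb index `HM₁(G) = ∑_{uv ∈ E(G)} (d(u) + d(v))²`. -/
def hyperZagreb {V : Type*} [Fintype V] [DecidableEq V] (G : SimpleGraph V)
    [DecidableRel G.Adj] : ℤ :=
  ∑ e ∈ G.edgeFinset,
    Sym2.lift ⟨fun u v => ((G.degree u : ℤ) + (G.degree v : ℤ)) ^ 2, fun _ _ => by ring⟩ e

/-- Reduced second Zagreb index `RM₂(G) = ∑_{uv ∈ E(G)} (d(u) - 1)(d(v) - 1)`. -/
def reducedSecondZagreb {V : Type*} [Fintype V] [DecidableEq V] (G : SimpleGraph V)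
    [DecidableRel G.Adj] : ℤ :=
  ∑ e ∈ G.edgeFinset,
    Sym2.lift ⟨fun u v => ((G.degree u : ℤ) - 1) * ((G.degree v : ℤ) - 1), fun _ _ => by ring⟩ e

lemma hdeg {W : Type*} [Fintype W] (G : SimpleGraph W) [DecidableRel G.Adj] (v : W) :
    G.degree v = ∑ w, if G.Adj v w then 1 else 0 := by
  rw [← SimpleGraph.card_neighborFinset_eq_degree, SimpleGraph.neighborFinset_eq_filter,
    Finset.card_filter]

theorem forgottenIndex_coronaJoin {V₁ V₂ : Type*} [Fintype V₁] [Fintype V₂]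
    [DecidableEq V₁] [DecidableEq V₂] (G₁ : SimpleGraph V₁) (G₂ : SimpleGraph V₂)
    [DecidableRel G₁.Adj] [DecidableRel G₂.Adj]
    (hG₁ : G₁.Connected) (hG₂ : G₂.Connected)
    (n₁ n₂ m₁ m₂ : ℕ)
    (hn₁ : Fintype.card V₁ = n₁) (hn₂ : Fintype.card V₂ = n₂)
    (hm₁ : G₁.edgeFinset.card = m₁) (hm₂ : G₂.edgeFinset.card = m₂) :
    forgottenIndex (coronaJoin G₁ G₂)
      = forgottenIndex G₁ + n₁ * forgottenIndex G₂
        + 3 * n₁ * n₂ * firstZagreb G₁ + 3 * (n₁ : ℤ) ^ 2 * firstZagreb G₂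
        + 6 * m₁ * (n₁ : ℤ) ^ 2 * (n₂ : ℤ) ^ 2 + 6 * m₂ * (n₁ : ℤ) ^ 3
        + (n₁ : ℤ) ^ 4 * n₂ * ((n₂ : ℤ) ^ 2 + 1) := by
  have hdl : ∀ u : V₁, (coronaJoin G₁ G₂).degree (Sum.inl u) = G₁.degree u + n₁ * n₂ := by
    intro u
    rw [hdeg (coronaJoin G₁ G₂), hdeg G₁, Fintype.sum_sum_type]
    simp [coronaJoin, Fintype.card_prod, hn₁, hn₂]
    rw [Finset.card_filter]
    refine Finset.sum_congr rfl fun x _ => ?_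
    by_cases h : G₁.Adj u x <;> simp_all [coronaJoin]
  have hdr : ∀ (i : V₁) (u : V₂),
      (coronaJoin G₁ G₂).degree (Sum.inr (i, u)) = G₂.degree u + n₁ := by
    intro i u
    rw [hdeg (coronaJoin G₁ G₂), hdeg G₂, Fintype.sum_sum_type]
    have : ∀ p : V₁ × V₂,
        (if (coronaJoin G₁ G₂).Adj (Sum.inr (i, u)) (Sum.inr p) then 1 else 0)
          = if p.1 = i ∧ G₂.Adj u p.2 then 1 else 0 := by
      rintro ⟨j, w⟩
      simp only [coronaJoin]
      by_cases h : i = j <;> simp [h, eq_comm]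
    rw [Finset.sum_congr rfl fun p _ => this p]
    have h2 : ∑ p : V₁ × V₂, (if p.1 = i ∧ G₂.Adj u p.2 then 1 else 0)
        = ∑ w : V₂, if G₂.Adj u w then 1 else 0 := by
      rw [Fintype.sum_prod_type]
      rw [Finset.sum_eq_single i]
      · simp
      · intro j _ hj; simp [hj]
      · simp
    rw [h2]
    simp [coronaJoin, hn₁, add_comm]
  have hs1 : (∑ v, (G₁.degree v : ℤ)) = 2 * m₁ := by
    have := G₁.sum_degrees_eq_twice_card_edges
    rw [hm₁] at this
    exact_mod_cast congrArg (Nat.cast : ℕ → ℤ) this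
  have hs2 : (∑ v, (G₂.degree v : ℤ)) = 2 * m₂ := by
    have := G₂.sum_degrees_eq_twice_card_edges
    rw [hm₂] at this
    exact_mod_cast congrArg (Nat.cast : ℕ → ℤ) this
  rw [forgottenIndex, Fintype.sum_sum_type]
  have e1 : ∑ u : V₁, ((coronaJoin G₁ G₂).degree (Sum.inl u) : ℤ) ^ 3
      = ∑ u : V₁, ((G₁.degree u : ℤ) + (n₁ : ℤ) * n₂) ^ 3 := by
    refine Finset.sum_congr rfl fun u _ => ?_
    rw [hdl u]; push_cast; ring
  have e2 : ∑ p : V₁ × V₂, ((coronaJoin G₁ G₂).degree (Sum.inr p) : ℤ) ^ 3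
      = (n₁ : ℤ) * ∑ u : V₂, ((G₂.degree u : ℤ) + (n₁ : ℤ)) ^ 3 := by
    rw [Fintype.sum_prod_type]
    have : ∀ i : V₁, ∑ u : V₂, ((coronaJoin G₁ G₂).degree (Sum.inr (i, u)) : ℤ) ^ 3
        = ∑ u : V₂, ((G₂.degree u : ℤ) + (n₁ : ℤ)) ^ 3 := by
      intro i
      refine Finset.sum_congr rfl fun u _ => ?_
      rw [hdr i u]; push_cast; ring
    rw [Finset.sum_congr rfl fun i _ => this i, Finset.sum_const, Finset.card_univ, hn₁,
      nsmul_eq_mul]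
  rw [e1, e2]
  have expand1 : ∑ u : V₁, ((G₁.degree u : ℤ) + (n₁ : ℤ) * n₂) ^ 3
      = forgottenIndex G₁ + 3 * ((n₁ : ℤ) * n₂) * firstZagreb G₁
        + 3 * ((n₁ : ℤ) * n₂) ^ 2 * (∑ v, (G₁.degree v : ℤ))
        + (n₁ : ℤ) * ((n₁ : ℤ) * n₂) ^ 3 := by
    rw [forgottenIndex, firstZagreb]
    have : ∀ u : V₁, ((G₁.degree u : ℤ) + (n₁ : ℤ) * n₂) ^ 3
        = (G₁.degree u : ℤ) ^ 3 + 3 * ((n₁ : ℤ) * n₂) * (G₁.degree u : ℤ) ^ 2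
          + 3 * ((n₁ : ℤ) * n₂) ^ 2 * (G₁.degree u : ℤ) + ((n₁ : ℤ) * n₂) ^ 3 := by
      intro u; ring
    rw [Finset.sum_congr rfl fun u _ => this u]
    simp [Finset.sum_add_distrib, Finset.mul_sum, Finset.card_univ, hn₁]
    try ring
  have expand2 : ∑ u : V₂, ((G₂.degree u : ℤ) + (n₁ : ℤ)) ^ 3
      = forgottenIndex G₂ + 3 * (n₁ : ℤ) * firstZagreb G₂
        + 3 * (n₁ : ℤ) ^ 2 * (∑ v, (G₂.degree v : ℤ))
        + (n₂ : ℤ) * (n₁ : ℤ) ^ 3 := by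
    rw [forgottenIndex, firstZagreb]
    have : ∀ u : V₂, ((G₂.degree u : ℤ) + (n₁ : ℤ)) ^ 3
        = (G₂.degree u : ℤ) ^ 3 + 3 * (n₁ : ℤ) * (G₂.degree u : ℤ) ^ 2
          + 3 * (n₁ : ℤ) ^ 2 * (G₂.degree u : ℤ) + (n₁ : ℤ) ^ 3 := by
      intro u; ring
    rw [Finset.sum_congr rfl fun u _ => this u]
    simp [Finset.sum_add_distrib, Finset.mul_sum, Finset.card_univ, hn₂]
    try ring
  rw [expand1, expand2, hs1, hs2]
  ring
end

section
/- Let G₁ be a simple connected graph with n₁ vertices and m₁ edges, and G₂ a simple connected graph with n₂ vertices and m₂ edges. Then the forgotten topological index of the subdivision vertex join satisfies F(G₁ ∔ G₂) = F(G₁) + F(G₂) + 3m₁·M₁(G₂) + m₁(2 + n₂)³ + 6m₂m₁² + m₁³n₂. -/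
open Finset

/-- The subdivision graph `S(G)`: one new vertex inserted on every edge of `G`. -/
def subdivisionGraph {V₁ : Type*} (G : SimpleGraph V₁) : SimpleGraph (V₁ ⊕ G.edgeSet) where
  Adj x y :=
    match x, y with
    | Sum.inl u, Sum.inr e => u ∈ (e : Sym2 V₁)
    | Sum.inr e, Sum.inl u => u ∈ (e : Sym2 V₁)
    | _, _ => False
  symm := by
    constructor
    rintro (u | e) (v | f) h
    · exact h.elim
    · exact h
    · exact h
    · exact h.elim
  loopless := by
    constructor
    rintro (u | e) h <;> exact h

instance subdivisionGraph.adjDecidable {V₁ : Type*} (G : SimpleGraph V₁) [DecidableEq V₁] :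
    DecidableRel (subdivisionGraph G).Adj
  | Sum.inl u, Sum.inr e => inferInstanceAs (Decidable (u ∈ (e : Sym2 V₁)))
  | Sum.inr e, Sum.inl u => inferInstanceAs (Decidable (u ∈ (e : Sym2 V₁)))
  | Sum.inl _, Sum.inl _ => inferInstanceAs (Decidable False)
  | Sum.inr _, Sum.inr _ => inferInstanceAs (Decidable False)

/-- The subdivision vertex join `G₁ ∔ G₂`: the disjoint union of `S(G₁)` and `G₂`,
with every subdivision (new) vertex of `S(G₁)` joined to every vertex of `G₂`. -/
def subdivisionVertexJoin {V₁ V₂ : Type*} (G₁ : SimpleGraph V₁) (G₂ : SimpleGraph V₂) :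
    SimpleGraph (V₁ ⊕ G₁.edgeSet ⊕ V₂) where
  Adj x y :=
    match x, y with
    | Sum.inl u, Sum.inr (Sum.inl e) => u ∈ (e : Sym2 V₁)
    | Sum.inr (Sum.inl e), Sum.inl u => u ∈ (e : Sym2 V₁)
    | Sum.inr (Sum.inl _), Sum.inr (Sum.inr _) => True
    | Sum.inr (Sum.inr _), Sum.inr (Sum.inl _) => True
    | Sum.inr (Sum.inr u), Sum.inr (Sum.inr v) => G₂.Adj u v
    | _, _ => False
  symm := by
    constructor
    rintro (u | e | u) (v | f | v) h <;> first | exact h.elim | exact h | trivial | exact h.symm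
  loopless := by
    constructor
    rintro (u | e | u) h
    · exact h
    · exact h
    · exact G₂.loopless.irrefl u h

instance subdivisionVertexJoin.adjDecidable {V₁ V₂ : Type*} (G₁ : SimpleGraph V₁)
    (G₂ : SimpleGraph V₂) [DecidableEq V₁] [DecidableRel G₂.Adj] :
    DecidableRel (subdivisionVertexJoin G₁ G₂).Adj
  | Sum.inl u, Sum.inr (Sum.inl e) => inferInstanceAs (Decidable (u ∈ (e : Sym2 V₁)))
  | Sum.inr (Sum.inl e), Sum.inl u => inferInstanceAs (Decidable (u ∈ (e : Sym2 V₁)))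
  | Sum.inr (Sum.inl _), Sum.inr (Sum.inr _) => inferInstanceAs (Decidable True)
  | Sum.inr (Sum.inr _), Sum.inr (Sum.inl _) => inferInstanceAs (Decidable True)
  | Sum.inr (Sum.inr u), Sum.inr (Sum.inr v) => inferInstanceAs (Decidable (G₂.Adj u v))
  | Sum.inl _, Sum.inl _ => inferInstanceAs (Decidable False)
  | Sum.inl _, Sum.inr (Sum.inr _) => inferInstanceAs (Decidable False)
  | Sum.inr (Sum.inr _), Sum.inl _ => inferInstanceAs (Decidable False)
  | Sum.inr (Sum.inl _), Sum.inr (Sum.inl _) => inferInstanceAs (Decidable False)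

section Aux

variable {V₁ V₂ : Type*} [Fintype V₁] [Fintype V₂] [DecidableEq V₁] [DecidableEq V₂]
  (G₁ : SimpleGraph V₁) (G₂ : SimpleGraph V₂) [DecidableRel G₁.Adj] [DecidableRel G₂.Adj]

lemma svj_degree_inl (u : V₁) :
    (subdivisionVertexJoin G₁ G₂).degree (Sum.inl u) = G₁.degree u := by
  classical
  rw [SimpleGraph.degree, SimpleGraph.neighborFinset_eq_filter, ← G₁.card_incidenceFinset_eq_degree]
  rw [Finset.card_filter]
  rw [Fintype.sum_sum_type, Fintype.sum_sum_type]
  have h0 : ∀ v : V₁, (if (subdivisionVertexJoin G₁ G₂).Adj (Sum.inl u) (Sum.inl v) then 1 else 0) = 0 := by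
    intro v; simp [subdivisionVertexJoin]
  have h2 : ∀ v : V₂, (if (subdivisionVertexJoin G₁ G₂).Adj (Sum.inl u) (Sum.inr (Sum.inr v)) then 1 else 0) = 0 := by
    intro v; simp [subdivisionVertexJoin]
  simp only [h0, h2, Finset.sum_const_zero, zero_add, add_zero]
  have : ∀ e : G₁.edgeSet,
      (if (subdivisionVertexJoin G₁ G₂).Adj (Sum.inl u) (Sum.inr (Sum.inl e)) then (1:ℕ) else 0)
        = if u ∈ (e : Sym2 V₁) then 1 else 0 := by
    intro e; rfl
  simp only [this]
  rw [← Finset.card_filter]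
  refine Finset.card_nbij (fun e => (e : Sym2 V₁)) ?_ ?_ ?_
  · intro e he
    simp only [Finset.mem_coe, Finset.mem_filter, Finset.mem_univ, true_and] at he
    simp [SimpleGraph.mem_incidenceFinset, SimpleGraph.incidenceSet, e.2, he]
  · intro e _ f _ h
    exact Subtype.ext h
  · intro s hs
    simp only [Finset.coe_filter, SimpleGraph.mem_incidenceFinset, SimpleGraph.incidenceSet,
      Set.mem_setOf_eq, Set.mem_sep_iff, Finset.mem_coe] at hs ⊢
    exact ⟨⟨s, hs.1⟩, by simp [hs.2], rfl⟩

lemma svj_degree_sub (e : G₁.edgeSet) :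
    (subdivisionVertexJoin G₁ G₂).degree (Sum.inr (Sum.inl e)) = 2 + Fintype.card V₂ := by
  classical
  rw [SimpleGraph.degree, SimpleGraph.neighborFinset_eq_filter, Finset.card_filter]
  rw [Fintype.sum_sum_type, Fintype.sum_sum_type]
  have h1 : ∀ f : G₁.edgeSet, (if (subdivisionVertexJoin G₁ G₂).Adj (Sum.inr (Sum.inl e)) (Sum.inr (Sum.inl f)) then (1:ℕ) else 0) = 0 := by
    intro f; simp [subdivisionVertexJoin]
  have h2 : ∀ v : V₂, (if (subdivisionVertexJoin G₁ G₂).Adj (Sum.inr (Sum.inl e)) (Sum.inr (Sum.inr v)) then (1:ℕ) else 0) = 1 := by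
    intro v; simp [subdivisionVertexJoin]
  have h0 : ∀ v : V₁,
      (if (subdivisionVertexJoin G₁ G₂).Adj (Sum.inr (Sum.inl e)) (Sum.inl v) then (1:ℕ) else 0)
        = if v ∈ (e : Sym2 V₁) then 1 else 0 := by
    intro v; rfl
  simp only [h0, h1, h2, Finset.sum_const_zero, Finset.sum_const, smul_eq_mul, mul_one,
    Finset.card_univ, zero_add]
  congr 1
  rw [← Finset.card_filter]
  obtain ⟨s, hs⟩ := e
  induction s using Sym2.ind with
  | _ a b =>
    have hab : a ≠ b := (G₁.mem_edgeSet.mp hs).ne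
    have : Finset.univ.filter (fun v => v ∈ (⟨s(a,b), hs⟩ : G₁.edgeSet).1) = {a, b} := by
      ext v; simp [Sym2.mem_iff]
    rw [this, Finset.card_pair hab]

lemma svj_degree_inr (v : V₂) :
    (subdivisionVertexJoin G₁ G₂).degree (Sum.inr (Sum.inr v))
      = G₂.degree v + G₁.edgeFinset.card := by
  classical
  rw [SimpleGraph.degree, SimpleGraph.neighborFinset_eq_filter, Finset.card_filter]
  rw [Fintype.sum_sum_type, Fintype.sum_sum_type]
  have h0 : ∀ u : V₁, (if (subdivisionVertexJoin G₁ G₂).Adj (Sum.inr (Sum.inr v)) (Sum.inl u) then (1:ℕ) else 0) = 0 := by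
    intro u; simp [subdivisionVertexJoin]
  have h1 : ∀ f : G₁.edgeSet, (if (subdivisionVertexJoin G₁ G₂).Adj (Sum.inr (Sum.inr v)) (Sum.inr (Sum.inl f)) then (1:ℕ) else 0) = 1 := by
    intro f; simp [subdivisionVertexJoin]
  have h2 : ∀ w : V₂,
      (if (subdivisionVertexJoin G₁ G₂).Adj (Sum.inr (Sum.inr v)) (Sum.inr (Sum.inr w)) then (1:ℕ) else 0)
        = if G₂.Adj v w then 1 else 0 := by
    intro w; rfl
  simp only [h0, h1, h2, Finset.sum_const_zero, Finset.sum_const, smul_eq_mul, mul_one,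
    Finset.card_univ, zero_add]
  rw [← Finset.card_filter, ← SimpleGraph.neighborFinset_eq_filter, SimpleGraph.edgeFinset,
    Set.toFinset_card]
  rw [add_comm]
  rfl

end Aux

theorem forgottenIndex_subdivisionVertexJoin {V₁ V₂ : Type*} [Fintype V₁] [Fintype V₂]
    [DecidableEq V₁] [DecidableEq V₂] (G₁ : SimpleGraph V₁) (G₂ : SimpleGraph V₂)
    [DecidableRel G₁.Adj] [DecidableRel G₂.Adj]
    (hG₁ : G₁.Connected) (hG₂ : G₂.Connected)
    (n₁ n₂ m₁ m₂ : ℕ)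
    (hn₁ : Fintype.card V₁ = n₁) (hn₂ : Fintype.card V₂ = n₂)
    (hm₁ : G₁.edgeFinset.card = m₁) (hm₂ : G₂.edgeFinset.card = m₂) :
    forgottenIndex (subdivisionVertexJoin G₁ G₂)
      = forgottenIndex G₁ + forgottenIndex G₂ + 3 * m₁ * firstZagreb G₂
        + m₁ * (2 + (n₂ : ℤ)) ^ 3 + 6 * m₂ * (m₁ : ℤ) ^ 2 + (m₁ : ℤ) ^ 3 * n₂ := by
  
  have hcard : Fintype.card G₁.edgeSet = m₁ := by
    rw [← hm₁, SimpleGraph.edgeFinset, Set.toFinset_card]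
  unfold forgottenIndex
  rw [Fintype.sum_sum_type, Fintype.sum_sum_type]
  have e1 : ∀ u : V₁, ((subdivisionVertexJoin G₁ G₂).degree (Sum.inl u) : ℤ) ^ 3
      = (G₁.degree u : ℤ) ^ 3 := by intro u; rw [svj_degree_inl]
  have e2 : ∀ e : G₁.edgeSet, ((subdivisionVertexJoin G₁ G₂).degree (Sum.inr (Sum.inl e)) : ℤ) ^ 3
      = (2 + (n₂ : ℤ)) ^ 3 := by intro e; rw [svj_degree_sub, hn₂]; push_cast; ring
  have e3 : ∀ v : V₂, ((subdivisionVertexJoin G₁ G₂).degree (Sum.inr (Sum.inr v)) : ℤ) ^ 3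
      = ((G₂.degree v : ℤ) + (m₁ : ℤ)) ^ 3 := by
    intro v; rw [svj_degree_inr, hm₁]; push_cast; ring
  simp only [e1, e2, e3, Finset.sum_const, Finset.card_univ, hcard, nsmul_eq_mul]
  have expand : ∀ v : V₂, ((G₂.degree v : ℤ) + (m₁ : ℤ)) ^ 3
      = (G₂.degree v : ℤ)^3 + 3 * (m₁:ℤ) * (G₂.degree v : ℤ)^2
        + 3 * (m₁:ℤ)^2 * (G₂.degree v : ℤ) + (m₁:ℤ)^3 := by intro v; ring
  simp only [expand, Finset.sum_add_distrib, ← Finset.mul_sum, Finset.sum_const,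
    Finset.card_univ, nsmul_eq_mul]
  have hsum : ∑ v : V₂, (G₂.degree v : ℤ) = 2 * m₂ := by
    rw [← Nat.cast_sum]
    rw [SimpleGraph.sum_degrees_eq_twice_card_edges, hm₂]; push_cast; ring
  rw [hsum, hn₂]
  unfold firstZagreb
  ring
end

section
/- Let G₁ be a simple connected graph with n₁ vertices and m₁ edges, and G₂ a simple connected graph with n₂ vertices and m₂ edges. Then the first hyper Zagreb index of the corona join product satisfies HM₁(G₁ ⊕ G₂) = HM₁(G₁) + n₁·HM₁(G₂) + 5n₁[n₂·M₁(G₁) + n₁·M₁(G₂)] + 4n₁[m₁n₁n₂² + m₂n₁² + 2m₁m₂] + n₁²(n₂ + 1)[4m₁n₂ + 4m₂n₁ + n₁²n₂(n₂ + 1)]. -/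
open Finset

lemma pairSum {V : Type*} [Fintype V] [DecidableEq V] (G : SimpleGraph V) [DecidableRel G.Adj]
    (f : V → V → ℤ) (hf : ∀ u v, f u v = f v u) :
    ∑ u, ∑ v, (if G.Adj u v then f u v else 0)
      = 2 * ∑ e ∈ G.edgeFinset, Sym2.lift ⟨f, hf⟩ e := by
  have h1 : ∑ u, ∑ v, (if G.Adj u v then f u v else 0)
      = ∑ p ∈ (univ ×ˢ univ : Finset (V × V)).filter (fun p => G.Adj p.1 p.2), f p.1 p.2 := by
    rw [Finset.sum_filter, Finset.sum_product]
  have h2 : ∑ p ∈ (univ ×ˢ univ : Finset (V × V)).filter (fun p => G.Adj p.1 p.2), f p.1 p.2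
      = ∑ d : G.Dart, Sym2.lift ⟨f, hf⟩ d.edge := by
    refine Finset.sum_bij' (fun p hp => (⟨p, (Finset.mem_filter.1 hp).2⟩ : G.Dart))
      (fun d _ => d.toProd) (fun p hp => Finset.mem_univ _) ?_ ?_ ?_ ?_
    · rintro ⟨⟨a, b⟩, h⟩ _
      simpa using h
    · intro p hp; rfl
    · rintro ⟨⟨a, b⟩, h⟩ _; rfl
    · intro p hp; rfl
  have h3 : ∑ d : G.Dart, Sym2.lift ⟨f, hf⟩ d.edge
      = ∑ e ∈ G.edgeFinset, ∑ d ∈ ({d : G.Dart | d.edge = e} : Finset _),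
          Sym2.lift ⟨f, hf⟩ d.edge :=
    (Finset.sum_fiberwise_of_maps_to
      (fun d _ => SimpleGraph.mem_edgeFinset.2 d.edge_mem) _).symm
  rw [h1, h2, h3, Finset.mul_sum]
  refine Finset.sum_congr rfl fun e he => ?_
  have hcard : #({d : G.Dart | d.edge = e} : Finset _) = 2 :=
    G.dart_edge_fiber_card e (SimpleGraph.mem_edgeFinset.1 he)
  calc ∑ d ∈ ({d : G.Dart | d.edge = e} : Finset _), Sym2.lift ⟨f, hf⟩ d.edge
      = ∑ _d ∈ ({d : G.Dart | d.edge = e} : Finset _), Sym2.lift ⟨f, hf⟩ e := by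
        refine Finset.sum_congr rfl fun d hd => ?_
        rw [Finset.mem_filter] at hd
        rw [hd.2]
    _ = 2 * Sym2.lift ⟨f, hf⟩ e := by rw [Finset.sum_const, hcard]; ring

lemma booleSum {V : Type*} [Fintype V] [DecidableEq V] (G : SimpleGraph V) [DecidableRel G.Adj]
    (u : V) : ∑ v, (if G.Adj u v then (1 : ℤ) else 0) = G.degree u := by
  have h : G.neighborFinset u = filter (fun x => G.Adj u x) univ := by ext v; simp
  rw [Finset.sum_boole, SimpleGraph.degree, h]

lemma degSum {V : Type*} [Fintype V] [DecidableEq V] (G : SimpleGraph V) [DecidableRel G.Adj] :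
    ∑ v, (G.degree v : ℤ) = 2 * #G.edgeFinset := by
  exact_mod_cast congrArg (Nat.cast : ℕ → ℤ) G.sum_degrees_eq_twice_card_edges

lemma sum_adj_degL {V : Type*} [Fintype V] [DecidableEq V] (G : SimpleGraph V)
    [DecidableRel G.Adj] :
    ∑ u, ∑ v, (if G.Adj u v then (G.degree u : ℤ) else 0) = firstZagreb G := by
  unfold firstZagreb
  refine Finset.sum_congr rfl fun u _ => ?_
  have : ∑ v, (if G.Adj u v then (G.degree u : ℤ) else 0)
      = (G.degree u : ℤ) * ∑ v, (if G.Adj u v then (1 : ℤ) else 0) := by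
    rw [Finset.mul_sum]; exact Finset.sum_congr rfl fun v _ => by split <;> ring
  rw [this, booleSum]; ring

lemma sum_adj_degR {V : Type*} [Fintype V] [DecidableEq V] (G : SimpleGraph V)
    [DecidableRel G.Adj] :
    ∑ u, ∑ v, (if G.Adj u v then (G.degree v : ℤ) else 0) = firstZagreb G := by
  rw [Finset.sum_comm, ← sum_adj_degL]
  exact Finset.sum_congr rfl fun u _ => Finset.sum_congr rfl fun v _ => by
    simp [SimpleGraph.adj_comm]

lemma sum_ite_const {α : Type*} (s : Finset α) (c : Prop) [Decidable c] (f : α → ℤ) :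
    ∑ x ∈ s, (if c then f x else 0) = if c then ∑ x ∈ s, f x else 0 := by
  split <;> simp

lemma shiftBlock {V : Type*} [Fintype V] [DecidableEq V] (G : SimpleGraph V)
    [DecidableRel G.Adj] (K : ℤ) :
    ∑ u, ∑ v, (if G.Adj u v then (((G.degree u : ℤ) + K) + ((G.degree v : ℤ) + K)) ^ 2 else 0)
      = 2 * hyperZagreb G + 8 * K * firstZagreb G + 8 * K ^ 2 * #G.edgeFinset := by
  have expand : ∀ u v : V,
      (if G.Adj u v then (((G.degree u : ℤ) + K) + ((G.degree v : ℤ) + K)) ^ 2 else 0)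
        = (if G.Adj u v then ((G.degree u : ℤ) + (G.degree v : ℤ)) ^ 2 else 0)
          + 4 * K * (if G.Adj u v then (G.degree u : ℤ) else 0)
          + 4 * K * (if G.Adj u v then (G.degree v : ℤ) else 0)
          + 4 * K ^ 2 * (if G.Adj u v then (1 : ℤ) else 0) := by
    intro u v; split <;> ring
  simp only [expand, Finset.sum_add_distrib, ← Finset.mul_sum]
  have hb : ∑ u : V, ∑ v, (if G.Adj u v then (1 : ℤ) else 0) = ∑ u : V, (G.degree u : ℤ) :=
    Finset.sum_congr rfl fun u _ => booleSum G u
  rw [pairSum G _ (fun u v => by ring), sum_adj_degL, sum_adj_degR, hb, degSum]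
  have hh : (∑ e ∈ G.edgeFinset,
      Sym2.lift ⟨fun u v => ((G.degree u : ℤ) + (G.degree v : ℤ)) ^ 2,
        fun u v => by ring⟩ e) = hyperZagreb G := rfl
  rw [hh]; ring

lemma crossBlock {V₁ V₂ : Type*} [Fintype V₁] [Fintype V₂] [DecidableEq V₁] [DecidableEq V₂]
    (G₁ : SimpleGraph V₁) (G₂ : SimpleGraph V₂) [DecidableRel G₁.Adj] [DecidableRel G₂.Adj]
    (c : ℤ) :
    ∑ u : V₁, ∑ v : V₂, ((G₁.degree u : ℤ) + (G₂.degree v : ℤ) + c) ^ 2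
      = (Fintype.card V₂ : ℤ) * firstZagreb G₁ + (Fintype.card V₁ : ℤ) * firstZagreb G₂
        + (Fintype.card V₁ : ℤ) * (Fintype.card V₂ : ℤ) * c ^ 2
        + 2 * (2 * #G₁.edgeFinset) * (2 * #G₂.edgeFinset)
        + 2 * c * (Fintype.card V₂ : ℤ) * (2 * #G₁.edgeFinset)
        + 2 * c * (Fintype.card V₁ : ℤ) * (2 * #G₂.edgeFinset) := by
  have expand : ∀ (u : V₁) (v : V₂),
      ((G₁.degree u : ℤ) + (G₂.degree v : ℤ) + c) ^ 2
        = (G₁.degree u : ℤ) ^ 2 + ((G₂.degree v : ℤ) ^ 2 + (c ^ 2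
          + ((2 * (G₁.degree u : ℤ) + 2 * c) * (G₂.degree v : ℤ)
          + (2 * c) * (G₁.degree u : ℤ)))) := by
    intro u v; ring
  simp only [expand, Finset.sum_add_distrib, ← Finset.mul_sum, Finset.sum_const,
    Finset.card_univ, nsmul_eq_mul, degSum]
  have h1 := degSum G₁
  have h2 := degSum G₂
  have hz1 : ∑ u : V₁, (G₁.degree u : ℤ) ^ 2 = firstZagreb G₁ := rfl
  have hz2 : ∑ v : V₂, (G₂.degree v : ℤ) ^ 2 = firstZagreb G₂ := rfl
  have h3 : ∑ x : V₁, (2 * (G₁.degree x : ℤ) + 2 * c) * (2 * (#G₂.edgeFinset : ℤ))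
      = 2 * (2 * (#G₂.edgeFinset : ℤ)) * (2 * (#G₁.edgeFinset : ℤ))
        + (Fintype.card V₁ : ℤ) * (2 * c * (2 * (#G₂.edgeFinset : ℤ))) := by
    have e : ∀ x : V₁, (2 * (G₁.degree x : ℤ) + 2 * c) * (2 * (#G₂.edgeFinset : ℤ))
        = (2 * (2 * (#G₂.edgeFinset : ℤ))) * (G₁.degree x : ℤ)
          + 2 * c * (2 * (#G₂.edgeFinset : ℤ)) := by intro x; ring
    simp only [e, Finset.sum_add_distrib, ← Finset.mul_sum, h1, Finset.sum_const,
      Finset.card_univ, nsmul_eq_mul]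
    ring
  rw [hz1, hz2, h3]
  ring

set_option linter.unusedSectionVars false

section DegLemmas
variable {V₁ V₂ : Type*} [Fintype V₁] [Fintype V₂] [DecidableEq V₁] [DecidableEq V₂]
  (G₁ : SimpleGraph V₁) (G₂ : SimpleGraph V₂) [DecidableRel G₁.Adj] [DecidableRel G₂.Adj]

lemma coronaJoin_adj_inl_inl (u v : V₁) :
    (coronaJoin G₁ G₂).Adj (Sum.inl u) (Sum.inl v) ↔ G₁.Adj u v := Iff.rfl

lemma coronaJoin_adj_inl_inr (u : V₁) (p : V₁ × V₂) :
    (coronaJoin G₁ G₂).Adj (Sum.inl u) (Sum.inr p) := trivial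

lemma coronaJoin_adj_inr_inl (p : V₁ × V₂) (u : V₁) :
    (coronaJoin G₁ G₂).Adj (Sum.inr p) (Sum.inl u) := trivial

lemma coronaJoin_adj_inr_inr (i j : V₁) (u v : V₂) :
    (coronaJoin G₁ G₂).Adj (Sum.inr (i, u)) (Sum.inr (j, v)) ↔ i = j ∧ G₂.Adj u v := Iff.rfl

lemma coronaJoin_degree_inl (u : V₁) :
    (coronaJoin G₁ G₂).degree (Sum.inl u)
      = G₁.degree u + Fintype.card V₁ * Fintype.card V₂ := by
  have h : (coronaJoin G₁ G₂).neighborFinset (Sum.inl u)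
      = (G₁.neighborFinset u).disjSum (univ : Finset (V₁ × V₂)) := by
    ext x
    rcases x with v | ⟨j, v⟩ <;>
      simp only [SimpleGraph.mem_neighborFinset] <;>
      simp [SimpleGraph.mem_neighborFinset, coronaJoin]
  rw [SimpleGraph.degree, h, Finset.card_disjSum, Finset.card_univ, Fintype.card_prod,
    SimpleGraph.card_neighborFinset_eq_degree]

lemma coronaJoin_degree_inr (i : V₁) (u : V₂) :
    (coronaJoin G₁ G₂).degree (Sum.inr (i, u))
      = G₂.degree u + Fintype.card V₁ := by
  have h : (coronaJoin G₁ G₂).neighborFinset (Sum.inr (i, u))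
      = (univ : Finset V₁).disjSum (({i} : Finset V₁) ×ˢ G₂.neighborFinset u) := by
    ext x
    rcases x with v | ⟨j, v⟩ <;>
      simp only [SimpleGraph.mem_neighborFinset] <;>
      simp [SimpleGraph.mem_neighborFinset, coronaJoin] <;> aesop
  rw [SimpleGraph.degree, h, Finset.card_disjSum, Finset.card_univ, Finset.card_product,
    Finset.card_singleton, one_mul, SimpleGraph.card_neighborFinset_eq_degree]
  ring

end DegLemmas

theorem hyperZagreb_coronaJoin {V₁ V₂ : Type*} [Fintype V₁] [Fintype V₂]
    [DecidableEq V₁] [DecidableEq V₂] (G₁ : SimpleGraph V₁) (G₂ : SimpleGraph V₂)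
    [DecidableRel G₁.Adj] [DecidableRel G₂.Adj]
    (hG₁ : G₁.Connected) (hG₂ : G₂.Connected)
    (n₁ n₂ m₁ m₂ : ℕ)
    (hn₁ : Fintype.card V₁ = n₁) (hn₂ : Fintype.card V₂ = n₂)
    (hm₁ : G₁.edgeFinset.card = m₁) (hm₂ : G₂.edgeFinset.card = m₂) :
    hyperZagreb (coronaJoin G₁ G₂)
      = hyperZagreb G₁ + n₁ * hyperZagreb G₂
        + 5 * n₁ * (n₂ * firstZagreb G₁ + n₁ * firstZagreb G₂)
        + 4 * n₁ * (m₁ * n₁ * (n₂ : ℤ) ^ 2 + m₂ * (n₁ : ℤ) ^ 2 + 2 * m₁ * m₂)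
        + (n₁ : ℤ) ^ 2 * ((n₂ : ℤ) + 1)
          * (4 * m₁ * n₂ + 4 * m₂ * n₁ + (n₁ : ℤ) ^ 2 * n₂ * ((n₂ : ℤ) + 1)) := by
  subst hn₁ hn₂ hm₁ hm₂
  apply mul_left_cancel₀ (two_ne_zero (α := ℤ))
  have hCJ : 2 * hyperZagreb (coronaJoin G₁ G₂)
      = ∑ x, ∑ y, (if (coronaJoin G₁ G₂).Adj x y
          then (((coronaJoin G₁ G₂).degree x : ℤ) + ((coronaJoin G₁ G₂).degree y : ℤ)) ^ 2
          else 0) :=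
    (pairSum _ _ (fun u v => by ring)).symm
  rw [hCJ]
  simp only [Fintype.sum_sum_type, Fintype.sum_prod_type]
  simp only [coronaJoin_adj_inl_inl, coronaJoin_adj_inl_inr, coronaJoin_adj_inr_inl,
    coronaJoin_adj_inr_inr, coronaJoin_degree_inl, coronaJoin_degree_inr, if_true]
  push_cast
  have r1 : ∀ (x : V₁) (y : V₂),
      ((G₁.degree x : ℤ) + (Fintype.card V₁ : ℤ) * (Fintype.card V₂ : ℤ)
        + ((G₂.degree y : ℤ) + (Fintype.card V₁ : ℤ))) ^ 2
      = ((G₁.degree x : ℤ) + (G₂.degree y : ℤ)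
        + ((Fintype.card V₁ : ℤ) * (Fintype.card V₂ : ℤ) + (Fintype.card V₁ : ℤ))) ^ 2 := by
    intros; ring
  have r2 : ∀ (y : V₂) (x : V₁),
      ((G₂.degree y : ℤ) + (Fintype.card V₁ : ℤ)
        + ((G₁.degree x : ℤ) + (Fintype.card V₁ : ℤ) * (Fintype.card V₂ : ℤ))) ^ 2
      = ((G₂.degree y : ℤ) + (G₁.degree x : ℤ)
        + ((Fintype.card V₁ : ℤ) + (Fintype.card V₁ : ℤ) * (Fintype.card V₂ : ℤ))) ^ 2 := by
    intros; ring
  simp only [ite_and, sum_ite_const, Finset.sum_ite_eq, Finset.mem_univ, if_true,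
    Finset.sum_add_distrib, r1, r2, Finset.sum_const, Finset.card_univ, nsmul_eq_mul,
    ← Finset.mul_sum]
  rw [shiftBlock G₁, shiftBlock G₂, crossBlock G₁ G₂, crossBlock G₂ G₁]
  ring
end

section
/- Let G₁ be a simple connected graph with n₁ vertices and m₁ edges, and G₂ a simple connected graph with n₂ vertices and m₂ edges. Then the reduced second Zagreb index of the corona join product satisfies RM₂(G₁ ⊕ G₂) = RM₂(G₁) + n₁·RM₂(G₂) + n₁[n₂·M₁(G₁) + n₁·M₁(G₂)] + m₁n₁n₂(n₁n₂ − 2) + m₂n₁²(n₁ − 2) + 2n₁[2m₁m₂ + m₁n₂(n₁ − 1) + m₂n₁(n₁n₂ − 1)] + n₁²n₂[n₁²n₂ − n₁n₂ − n₁ + 1]. -/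
open Finset

section Helpers

set_option linter.unusedSectionVars false

variable {V : Type*} [Fintype V] [DecidableEq V] (G : SimpleGraph V) [DecidableRel G.Adj]

lemma dart_sum (f : V → V → ℤ) (hf : ∀ a b, f a b = f b a) :
    ∑ v, ∑ w ∈ G.neighborFinset v, f v w = 2 * ∑ e ∈ G.edgeFinset, Sym2.lift ⟨f, hf⟩ e := by
  have h1 : ∑ d : G.Dart, f d.fst d.snd = ∑ v, ∑ w ∈ G.neighborFinset v, f v w := by
    let e : (Σ v, G.neighborSet v) ≃ G.Dart :=
      { toFun := fun s => ⟨(s.1, s.2), s.2.2⟩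
        invFun := fun d => ⟨d.fst, d.snd, d.adj⟩
        left_inv := fun s => by ext <;> simp
        right_inv := fun d => by ext <;> simp }
    rw [← e.sum_comp (fun d => f d.fst d.snd)]
    rw [← Finset.univ_sigma_univ, Finset.sum_sigma]
    refine Finset.sum_congr rfl fun v _ => ?_
    rw [show (G.neighborFinset v) = (G.neighborSet v).toFinset from rfl, ← Finset.sum_set_coe]
    rfl
  have h2 : ∑ d : G.Dart, f d.fst d.snd = ∑ e ∈ G.edgeFinset, 2 * Sym2.lift ⟨f, hf⟩ e := by
    rw [← Finset.sum_fiberwise_of_maps_to (g := SimpleGraph.Dart.edge)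
      (fun d _ => SimpleGraph.mem_edgeFinset.mpr d.edge_mem) (fun d => f d.fst d.snd)]
    refine Finset.sum_congr rfl fun e he => ?_
    induction e with
    | _ a b =>
      have hab : G.Adj a b := SimpleGraph.mem_edgeFinset.mp he
      have hfib : Finset.univ.filter (fun d : G.Dart => d.edge = s(a, b)) =
          {(⟨(a,b), hab⟩ : G.Dart), (⟨(a,b), hab⟩ : G.Dart).symm} := by
        have := SimpleGraph.Dart.edge_fiber (⟨(a,b), hab⟩ : G.Dart)
        exact this
      rw [hfib, Finset.sum_pair (SimpleGraph.Dart.symm_ne _).symm]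
      simp [SimpleGraph.Dart.symm, Sym2.lift, hf a b]
      ring
  rw [← h1, h2, Finset.mul_sum]

lemma adj_sum (f : V → V → ℤ) (hf : ∀ a b, f a b = f b a) :
    ∑ v, ∑ w, (if G.Adj v w then f v w else 0) = 2 * ∑ e ∈ G.edgeFinset, Sym2.lift ⟨f, hf⟩ e := by
  rw [← dart_sum G f hf]
  refine Finset.sum_congr rfl fun v _ => ?_
  rw [SimpleGraph.neighborFinset_eq_filter, Finset.sum_filter]

lemma row_one (v : V) : ∑ w, (if G.Adj v w then (1:ℤ) else 0) = (G.degree v : ℤ) := by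
  rw [Finset.sum_boole]
  simp [SimpleGraph.degree, SimpleGraph.neighborFinset_eq_filter]

lemma sum_one : ∑ v, ∑ w, (if G.Adj v w then (1:ℤ) else 0) = 2 * (G.edgeFinset.card : ℤ) := by
  simp only [row_one]
  exact_mod_cast congrArg (Nat.cast : ℕ → ℤ) (SimpleGraph.sum_degrees_eq_twice_card_edges G)

lemma sum_dL : ∑ v, ∑ w, (if G.Adj v w then (G.degree v : ℤ) else 0) = firstZagreb G := by
  have h : ∀ v : V, ∑ w, (if G.Adj v w then (G.degree v : ℤ) else 0)
      = (G.degree v : ℤ) ^ 2 := by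
    intro v
    have : ∑ w, (if G.Adj v w then (G.degree v : ℤ) else 0)
        = (G.degree v : ℤ) * ∑ w, (if G.Adj v w then (1:ℤ) else 0) := by
      rw [Finset.mul_sum]; exact Finset.sum_congr rfl fun w _ => by split <;> ring
    rw [this, row_one]; ring
  simp only [h]; rfl

lemma sum_dR : ∑ v, ∑ w, (if G.Adj v w then (G.degree w : ℤ) else 0) = firstZagreb G := by
  rw [Finset.sum_comm]
  have : ∀ w v, (if G.Adj v w then (G.degree w : ℤ) else 0)
      = (if G.Adj w v then (G.degree w : ℤ) else 0) := by
    intro w v; exact if_congr (G.adj_comm v w) rfl rfl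
  simp only [this]
  exact sum_dL G

lemma sum_dd : ∑ v, ∑ w, (if G.Adj v w then (G.degree v : ℤ) * (G.degree w : ℤ) else 0)
    = 2 * reducedSecondZagreb G + 2 * firstZagreb G - 2 * (G.edgeFinset.card : ℤ) := by
  have key := adj_sum G (fun u v => ((G.degree u : ℤ) - 1) * ((G.degree v : ℤ) - 1))
    (fun _ _ => by ring)
  have expand : ∀ v w : V, (if G.Adj v w then ((G.degree v : ℤ) - 1) * ((G.degree w : ℤ) - 1) else 0)
      = (if G.Adj v w then (G.degree v : ℤ) * (G.degree w : ℤ) else 0)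
        - (if G.Adj v w then (G.degree v : ℤ) else 0)
        - (if G.Adj v w then (G.degree w : ℤ) else 0)
        + (if G.Adj v w then (1:ℤ) else 0) := by
    intro v w; split <;> ring
  simp only [expand, Finset.sum_add_distrib, Finset.sum_sub_distrib] at key
  rw [sum_dL, sum_dR, sum_one] at key
  have : (2 : ℤ) * ∑ e ∈ G.edgeFinset,
      Sym2.lift ⟨fun u v => ((G.degree u : ℤ) - 1) * ((G.degree v : ℤ) - 1), fun _ _ => by ring⟩ e
      = 2 * reducedSecondZagreb G := rfl
  linarith [key, this.symm]

lemma master (a b c : ℤ) :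
    ∑ v, ∑ w, (if G.Adj v w then
        a * ((G.degree v : ℤ) * (G.degree w : ℤ)) + b * ((G.degree v : ℤ) + (G.degree w : ℤ)) + c
      else 0)
    = a * (2 * reducedSecondZagreb G + 2 * firstZagreb G - 2 * (G.edgeFinset.card : ℤ))
      + 2 * b * firstZagreb G + 2 * c * (G.edgeFinset.card : ℤ) := by
  have expand : ∀ v w : V, (if G.Adj v w then
        a * ((G.degree v : ℤ) * (G.degree w : ℤ)) + b * ((G.degree v : ℤ) + (G.degree w : ℤ)) + c
      else 0)
      = a * (if G.Adj v w then (G.degree v : ℤ) * (G.degree w : ℤ) else 0)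
        + b * (if G.Adj v w then (G.degree v : ℤ) else 0)
        + b * (if G.Adj v w then (G.degree w : ℤ) else 0)
        + c * (if G.Adj v w then (1:ℤ) else 0) := by
    intro v w; split <;> ring
  simp only [expand, Finset.sum_add_distrib, ← Finset.mul_sum]
  rw [sum_dL, sum_dR, sum_one, sum_dd]
  ring

end Helpers

section Corona

set_option linter.unusedSectionVars false

variable {V₁ V₂ : Type*} [Fintype V₁] [Fintype V₂] [DecidableEq V₁] [DecidableEq V₂]
  (G₁ : SimpleGraph V₁) (G₂ : SimpleGraph V₂) [DecidableRel G₁.Adj] [DecidableRel G₂.Adj]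

lemma deg_inl (v : V₁) : ((coronaJoin G₁ G₂).degree (Sum.inl v) : ℤ)
    = (G₁.degree v : ℤ) + (Fintype.card V₁ : ℤ) * (Fintype.card V₂ : ℤ) := by
  rw [← row_one (coronaJoin G₁ G₂) (Sum.inl v), Fintype.sum_sum_type]
  have h1 : ∑ w : V₁, (if (coronaJoin G₁ G₂).Adj (Sum.inl v) (Sum.inl w) then (1:ℤ) else 0)
      = (G₁.degree v : ℤ) := by
    rw [← row_one G₁ v]
    exact Finset.sum_congr rfl fun w _ => if_congr Iff.rfl rfl rfl
  rw [h1]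
  simp [show ∀ p : V₁ × V₂, (coronaJoin G₁ G₂).Adj (Sum.inl v) (Sum.inr p) = True from fun _ => rfl,
    Fintype.card_prod, Finset.filter_true_of_mem]

lemma deg_inr (p : V₁ × V₂) : ((coronaJoin G₁ G₂).degree (Sum.inr p) : ℤ)
    = (G₂.degree p.2 : ℤ) + (Fintype.card V₁ : ℤ) := by
  obtain ⟨i, u⟩ := p
  rw [← row_one (coronaJoin G₁ G₂) (Sum.inr (i, u)), Fintype.sum_sum_type]
  have h1 : ∑ p : V₁ × V₂, (if (coronaJoin G₁ G₂).Adj (Sum.inr (i,u)) (Sum.inr p) then (1:ℤ) else 0)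
      = (G₂.degree u : ℤ) := by
    rw [Fintype.sum_prod_type, ← row_one G₂ u]
    have : ∀ j : V₁, ∑ w : V₂,
        (if (coronaJoin G₁ G₂).Adj (Sum.inr (i,u)) (Sum.inr (j,w)) then (1:ℤ) else 0)
        = if i = j then ∑ w, (if G₂.Adj u w then (1:ℤ) else 0) else 0 := by
      intro j
      by_cases h : i = j
      · simp only [h, if_true]
        exact Finset.sum_congr rfl fun w _ => if_congr (by simp [coronaJoin]) rfl rfl
      · simp only [h, if_false]
        refine Finset.sum_eq_zero fun w _ => ?_
        rw [if_neg]
        exact fun hc => h hc.1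
    simp only [this]
    simp
  rw [h1]
  have h2 : ∑ w : V₁, (if (coronaJoin G₁ G₂).Adj (Sum.inr (i,u)) (Sum.inl w) then (1:ℤ) else 0)
      = (Fintype.card V₁ : ℤ) := by
    simp [show ∀ w : V₁, (coronaJoin G₁ G₂).Adj (Sum.inr (i,u)) (Sum.inl w) = True from
      fun _ => rfl]
  rw [h2]
  ring

end Corona

theorem reducedSecondZagreb_coronaJoin {V₁ V₂ : Type*} [Fintype V₁] [Fintype V₂]
    [DecidableEq V₁] [DecidableEq V₂] (G₁ : SimpleGraph V₁) (G₂ : SimpleGraph V₂)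
    [DecidableRel G₁.Adj] [DecidableRel G₂.Adj]
    (hG₁ : G₁.Connected) (hG₂ : G₂.Connected)
    (n₁ n₂ m₁ m₂ : ℕ)
    (hn₁ : Fintype.card V₁ = n₁) (hn₂ : Fintype.card V₂ = n₂)
    (hm₁ : G₁.edgeFinset.card = m₁) (hm₂ : G₂.edgeFinset.card = m₂) :
    reducedSecondZagreb (coronaJoin G₁ G₂)
      = reducedSecondZagreb G₁ + n₁ * reducedSecondZagreb G₂
        + n₁ * (n₂ * firstZagreb G₁ + n₁ * firstZagreb G₂)
        + m₁ * n₁ * n₂ * ((n₁ : ℤ) * n₂ - 2) + m₂ * (n₁ : ℤ) ^ 2 * ((n₁ : ℤ) - 2)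
        + 2 * n₁ * (2 * m₁ * m₂ + m₁ * n₂ * ((n₁ : ℤ) - 1) + m₂ * n₁ * ((n₁ : ℤ) * n₂ - 1))
        + (n₁ : ℤ) ^ 2 * n₂ * ((n₁ : ℤ) ^ 2 * n₂ - (n₁ : ℤ) * n₂ - n₁ + 1) := by
  have hc1 : (Fintype.card V₁ : ℤ) = (n₁ : ℤ) := by exact_mod_cast congrArg Nat.cast hn₁
  have hc2 : (Fintype.card V₂ : ℤ) = (n₂ : ℤ) := by exact_mod_cast congrArg Nat.cast hn₂
  have he1 : (G₁.edgeFinset.card : ℤ) = (m₁ : ℤ) := by exact_mod_cast congrArg Nat.cast hm₁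
  have he2 : (G₂.edgeFinset.card : ℤ) = (m₂ : ℤ) := by exact_mod_cast congrArg Nat.cast hm₂
  -- degree sums
  have hs1 : ∑ v, (G₁.degree v : ℤ) = 2 * m₁ := by
    rw [← he1]
    exact_mod_cast congrArg (Nat.cast : ℕ → ℤ) (SimpleGraph.sum_degrees_eq_twice_card_edges G₁)
  have hs2 : ∑ u, (G₂.degree u : ℤ) = 2 * m₂ := by
    rw [← he2]
    exact_mod_cast congrArg (Nat.cast : ℕ → ℤ) (SimpleGraph.sum_degrees_eq_twice_card_edges G₂)
  -- the key double-counting identity for the corona join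
  have main : ∑ x, ∑ y, (if (coronaJoin G₁ G₂).Adj x y then
        (((coronaJoin G₁ G₂).degree x : ℤ) - 1) * (((coronaJoin G₁ G₂).degree y : ℤ) - 1) else 0)
      = 2 * reducedSecondZagreb (coronaJoin G₁ G₂) :=
    adj_sum (coronaJoin G₁ G₂) _ (fun _ _ => by ring)
  -- adjacency simp lemmas
  have adj_ll : ∀ (v w : V₁), (coronaJoin G₁ G₂).Adj (Sum.inl v) (Sum.inl w) = G₁.Adj v w :=
    fun _ _ => rfl
  have adj_lr : ∀ (v : V₁) (p : V₁ × V₂), (coronaJoin G₁ G₂).Adj (Sum.inl v) (Sum.inr p) = True :=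
    fun _ _ => rfl
  have adj_rl : ∀ (p : V₁ × V₂) (v : V₁), (coronaJoin G₁ G₂).Adj (Sum.inr p) (Sum.inl v) = True :=
    fun _ _ => rfl
  have adj_rr : ∀ (p q : V₁ × V₂), (coronaJoin G₁ G₂).Adj (Sum.inr p) (Sum.inr q)
      = (p.1 = q.1 ∧ G₂.Adj p.2 q.2) := by rintro ⟨i, u⟩ ⟨j, w⟩; rfl
  simp only [Fintype.sum_sum_type, adj_ll, adj_lr, adj_rl, adj_rr, if_true,
    deg_inl, deg_inr, hc1, hc2, Finset.sum_add_distrib] at main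
  -- Block evaluations
  have hLL : ∑ v, ∑ w, (if G₁.Adj v w then
        ((G₁.degree v : ℤ) + (n₁ : ℤ) * (n₂ : ℤ) - 1) * ((G₁.degree w : ℤ) + (n₁ : ℤ) * (n₂ : ℤ) - 1) else 0)
      = (2 * reducedSecondZagreb G₁ + 2 * firstZagreb G₁ - 2 * m₁)
        + 2 * ((n₁ : ℤ) * (n₂ : ℤ) - 1) * firstZagreb G₁ + 2 * ((n₁ : ℤ) * (n₂ : ℤ) - 1) ^ 2 * m₁ := by
    have conv : ∑ v, ∑ w, (if G₁.Adj v w then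
          ((G₁.degree v : ℤ) + (n₁ : ℤ) * (n₂ : ℤ) - 1) * ((G₁.degree w : ℤ) + (n₁ : ℤ) * (n₂ : ℤ) - 1) else 0)
        = ∑ v, ∑ w, (if G₁.Adj v w then
            1 * ((G₁.degree v : ℤ) * (G₁.degree w : ℤ))
            + ((n₁ : ℤ) * (n₂ : ℤ) - 1) * ((G₁.degree v : ℤ) + (G₁.degree w : ℤ)) + ((n₁ : ℤ) * (n₂ : ℤ) - 1) ^ 2 else 0) :=
      Finset.sum_congr rfl fun v _ => Finset.sum_congr rfl fun w _ => by split <;> ring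
    rw [conv, master, he1]; ring
  have hRR : ∑ u, ∑ w, (if G₂.Adj u w then
        ((G₂.degree u : ℤ) + (n₁ : ℤ) - 1) * ((G₂.degree w : ℤ) + (n₁ : ℤ) - 1) else 0)
      = (2 * reducedSecondZagreb G₂ + 2 * firstZagreb G₂ - 2 * m₂)
        + 2 * ((n₁ : ℤ) - 1) * firstZagreb G₂ + 2 * ((n₁ : ℤ) - 1) ^ 2 * m₂ := by
    have conv : ∑ u, ∑ w, (if G₂.Adj u w then
          ((G₂.degree u : ℤ) + (n₁ : ℤ) - 1) * ((G₂.degree w : ℤ) + (n₁ : ℤ) - 1) else 0)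
        = ∑ u, ∑ w, (if G₂.Adj u w then
            1 * ((G₂.degree u : ℤ) * (G₂.degree w : ℤ))
            + ((n₁ : ℤ) - 1) * ((G₂.degree u : ℤ) + (G₂.degree w : ℤ)) + ((n₁ : ℤ) - 1) ^ 2
          else 0) :=
      Finset.sum_congr rfl fun u _ => Finset.sum_congr rfl fun w _ => by split <;> ring
    rw [conv, master, he2]; ring
  have hD1 : ∑ v : V₁, ((G₁.degree v : ℤ) + (n₁ : ℤ) * (n₂ : ℤ) - 1) = 2 * m₁ + (n₁ : ℤ) * ((n₁ : ℤ) * (n₂ : ℤ) - 1) := by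
    have h : ∀ v : V₁, (G₁.degree v : ℤ) + (n₁ : ℤ) * (n₂ : ℤ) - 1 = (G₁.degree v : ℤ) + ((n₁ : ℤ) * (n₂ : ℤ) - 1) := fun v => by ring
    simp only [h]
    rw [Finset.sum_add_distrib, hs1, Finset.sum_const, Finset.card_univ, nsmul_eq_mul, hc1]
  have hD2 : ∑ u : V₂, ((G₂.degree u : ℤ) + (n₁ : ℤ) - 1)
      = 2 * m₂ + (n₂ : ℤ) * ((n₁ : ℤ) - 1) := by
    have h : ∀ u : V₂, (G₂.degree u : ℤ) + (n₁ : ℤ) - 1 = (G₂.degree u : ℤ) + ((n₁ : ℤ) - 1) :=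
      fun u => by ring
    simp only [h]
    rw [Finset.sum_add_distrib, hs2, Finset.sum_const, Finset.card_univ, nsmul_eq_mul, hc2]
  -- sum over all of V₁ × V₂ of the second-factor degrees
  have hP2 : ∑ p : V₁ × V₂, ((G₂.degree p.2 : ℤ) + (n₁ : ℤ) - 1)
      = (n₁ : ℤ) * (2 * m₂ + (n₂ : ℤ) * ((n₁ : ℤ) - 1)) := by
    rw [Fintype.sum_prod_type]
    simp only [hD2]
    rw [Finset.sum_const, Finset.card_univ, nsmul_eq_mul, hc1]
  have hB2 : ∑ p : V₁ × V₂, ∑ v : V₁,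
        ((G₂.degree p.2 : ℤ) + (n₁ : ℤ) - 1) * ((G₁.degree v : ℤ) + (n₁ : ℤ) * (n₂ : ℤ) - 1)
      = (n₁ : ℤ) * (2 * m₂ + (n₂ : ℤ) * ((n₁ : ℤ) - 1))
        * (2 * m₁ + (n₁ : ℤ) * ((n₁ : ℤ) * (n₂ : ℤ) - 1)) := by
    have h : ∀ p : V₁ × V₂, ∑ v : V₁,
          ((G₂.degree p.2 : ℤ) + (n₁ : ℤ) - 1) * ((G₁.degree v : ℤ) + (n₁ : ℤ) * (n₂ : ℤ) - 1)
        = ((G₂.degree p.2 : ℤ) + (n₁ : ℤ) - 1)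
          * (2 * m₁ + (n₁ : ℤ) * ((n₁ : ℤ) * (n₂ : ℤ) - 1)) := by
      intro p
      rw [← Finset.mul_sum, hD1]
    simp only [h]
    rw [← Finset.sum_mul, hP2]
  have hB3 : ∑ v : V₁, ∑ p : V₁ × V₂,
        ((G₁.degree v : ℤ) + (n₁ : ℤ) * (n₂ : ℤ) - 1) * ((G₂.degree p.2 : ℤ) + (n₁ : ℤ) - 1)
      = (2 * m₁ + (n₁ : ℤ) * ((n₁ : ℤ) * (n₂ : ℤ) - 1))
        * ((n₁ : ℤ) * (2 * m₂ + (n₂ : ℤ) * ((n₁ : ℤ) - 1))) := by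
    have h : ∀ v : V₁, ∑ p : V₁ × V₂,
          ((G₁.degree v : ℤ) + (n₁ : ℤ) * (n₂ : ℤ) - 1) * ((G₂.degree p.2 : ℤ) + (n₁ : ℤ) - 1)
        = ((G₁.degree v : ℤ) + (n₁ : ℤ) * (n₂ : ℤ) - 1)
          * ((n₁ : ℤ) * (2 * m₂ + (n₂ : ℤ) * ((n₁ : ℤ) - 1))) := by
      intro v
      rw [← Finset.mul_sum, hP2]
    simp only [h]
    rw [← Finset.sum_mul, hD1]
  have hB4 : ∑ p : V₁ × V₂, ∑ q : V₁ × V₂,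
        (if p.1 = q.1 ∧ G₂.Adj p.2 q.2 then
          ((G₂.degree p.2 : ℤ) + (n₁ : ℤ) - 1) * ((G₂.degree q.2 : ℤ) + (n₁ : ℤ) - 1) else 0)
      = (n₁ : ℤ) * ((2 * reducedSecondZagreb G₂ + 2 * firstZagreb G₂ - 2 * m₂)
        + 2 * ((n₁ : ℤ) - 1) * firstZagreb G₂ + 2 * ((n₁ : ℤ) - 1) ^ 2 * m₂) := by
    have hrow : ∀ (i : V₁) (u : V₂), ∑ q : V₁ × V₂,
          (if i = q.1 ∧ G₂.Adj u q.2 then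
            ((G₂.degree u : ℤ) + (n₁ : ℤ) - 1) * ((G₂.degree q.2 : ℤ) + (n₁ : ℤ) - 1) else 0)
        = ∑ w : V₂, (if G₂.Adj u w then
            ((G₂.degree u : ℤ) + (n₁ : ℤ) - 1) * ((G₂.degree w : ℤ) + (n₁ : ℤ) - 1) else 0) := by
      intro i u
      rw [Fintype.sum_prod_type]
      have h : ∀ (j : V₁) (w : V₂), (if i = j ∧ G₂.Adj u w then
            ((G₂.degree u : ℤ) + (n₁ : ℤ) - 1) * ((G₂.degree w : ℤ) + (n₁ : ℤ) - 1) else 0)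
          = (if i = j then (if G₂.Adj u w then
              ((G₂.degree u : ℤ) + (n₁ : ℤ) - 1) * ((G₂.degree w : ℤ) + (n₁ : ℤ) - 1) else 0)
            else 0) := by
        intro j w
        by_cases h1 : i = j <;> by_cases h2 : G₂.Adj u w <;> simp [h1, h2]
      simp only [h]
      rw [Finset.sum_comm]
      simp [Finset.sum_ite_eq]
    rw [Fintype.sum_prod_type]
    simp only [hrow]
    rw [Finset.sum_const, Finset.card_univ, nsmul_eq_mul, hc1, hRR]
  rw [hLL, hB2, hB3, hB4] at main
  refine mul_left_cancel₀ (show (2:ℤ) ≠ 0 by norm_num) ?_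
  linear_combination -main
end

section
/- Let G₁ be a simple connected graph with n₁ vertices and m₁ edges, let S(G₁) be its subdivision graph with m₁' = 2m₁ edges, and let G₂ be a simple connected graph with n₂ vertices and m₂ edges. Then the reduced second Zagreb index of the subdivision vertex join satisfies RM₂(G₁ ∔ G₂) = RM₂(G₂) + m₁[M₁(G₂) + m₁m₂ − 2m₂] − m₁'(n₂ + 1) + m₁(n₂ + 1)[2m₂ + m₁n₂ − n₂] + (n₂ + 1)·Σ_{uv∈E(S(G₁))} d_{G₁}(u), where in the last sum each edge of S(G₁) joins an original vertex u ∈ V(G₁) to a subdivision vertex, and d_{G₁}(u) is the degree of that original endpoint u in G₁. -/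
open Finset

set_option linter.unusedSectionVars false


lemma double_sum_edge {V : Type*} [Fintype V] [DecidableEq V] (G : SimpleGraph V)
    [DecidableRel G.Adj] (f : V → V → ℤ) (hf : ∀ u v, f u v = f v u) :
    ∑ u, ∑ v ∈ G.neighborFinset u, f u v = 2 * ∑ e ∈ G.edgeFinset, Sym2.lift ⟨f, hf⟩ e := by
  have key : ∀ d : G.Dart, f d.fst d.snd = Sym2.lift ⟨f, hf⟩ d.edge := fun d => rfl
  have h1 : ∑ d : G.Dart, f d.fst d.snd = ∑ u, ∑ v ∈ G.neighborFinset u, f u v := by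
    rw [← Finset.sum_fiberwise_of_maps_to (g := fun d : G.Dart => d.fst)
      (fun d _ => mem_univ _)]
    refine Finset.sum_congr rfl fun u _ => ?_
    rw [show (univ.filter fun d : G.Dart => d.fst = u) = univ.image (G.dartOfNeighborSet u) from
      G.dart_fst_fiber u]
    rw [Finset.sum_image (fun a _ b _ h => G.dartOfNeighborSet_injective u h)]
    rw [SimpleGraph.neighborFinset_def]
    trans ∑ x : ↑(G.neighborSet u), f u ↑x
    · exact Finset.sum_congr rfl fun x _ => rfl
    · exact (Finset.sum_toFinset_eq_subtype (fun v => v ∈ G.neighborSet u) (fun v => f u v)).symm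
  have h2 : ∑ d : G.Dart, f d.fst d.snd = 2 * ∑ e ∈ G.edgeFinset, Sym2.lift ⟨f, hf⟩ e := by
    simp_rw [key]
    rw [← Finset.sum_fiberwise_of_maps_to (g := fun d : G.Dart => d.edge)
      (t := G.edgeFinset) (fun d _ => by simp [SimpleGraph.Dart.edge_mem]),
      Finset.mul_sum]
    refine Finset.sum_congr rfl fun e he => ?_
    rw [Finset.sum_congr rfl (fun d hd => by rw [(mem_filter.1 hd).2]), Finset.sum_const,
      G.dart_edge_fiber_card e (by simpa using he)]
    simp [two_mul]
  rw [← h1, h2]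

lemma sum_nbr {W : Type*} [Fintype W] (H : SimpleGraph W) [DecidableRel H.Adj]
    (f : W → W → ℤ) :
    ∑ x, ∑ y ∈ H.neighborFinset x, f x y = ∑ x, ∑ y, if H.Adj x y then f x y else 0 := by
  simp [SimpleGraph.neighborFinset_eq_filter, Finset.sum_filter]

section Aux
variable {V₁ V₂ : Type*} [Fintype V₁] [Fintype V₂] [DecidableEq V₁] [DecidableEq V₂]
variable (G₁ : SimpleGraph V₁) (G₂ : SimpleGraph V₂) [DecidableRel G₁.Adj] [DecidableRel G₂.Adj]

lemma card_filter_mem_sym2 (e : Sym2 V₁) (he : e ∈ G₁.edgeSet) :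
    #(univ.filter fun u : V₁ => u ∈ e) = 2 := by
  induction e with
  | _ a b =>
    have hab : a ≠ b := (G₁.mem_edgeSet.mp he).ne
    have : (univ.filter fun u : V₁ => u ∈ s(a, b)) = {a, b} := by
      ext u; simp [Sym2.mem_iff]
    rw [this, card_insert_of_notMem (by simpa using hab), card_singleton]

lemma sum_ite_mem_sym2 (e : Sym2 V₁) (he : e ∈ G₁.edgeSet) (c : ℤ) :
    ∑ u : V₁, (if u ∈ e then c else 0) = 2 * c := by
  rw [← Finset.sum_filter, Finset.sum_const, card_filter_mem_sym2 G₁ e he]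
  simp [two_mul]

lemma card_filter_incidence (u : V₁) :
    #(univ.filter fun e : G₁.edgeSet => u ∈ (e : Sym2 V₁)) = G₁.degree u := by
  rw [← SimpleGraph.card_incidenceSet_eq_degree, ← Fintype.card_subtype]
  exact Fintype.card_congr
    ⟨fun x => ⟨x.1.1, x.1.2, x.2⟩, fun y => ⟨⟨y.1, y.2.1⟩, y.2.2⟩,
      fun x => rfl, fun y => rfl⟩

lemma sum_ite_incidence (u : V₁) (c : ℤ) :
    ∑ e : G₁.edgeSet, (if u ∈ (e : Sym2 V₁) then c else 0) = (G₁.degree u : ℤ) * c := by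
  rw [← Finset.sum_filter, Finset.sum_const, card_filter_incidence G₁ u]
  simp [mul_comm]

-- adjacency rfl lemmas for the join
variable (u v : V₁) (e f : G₁.edgeSet) (a b : V₂)

lemma adj_ll : (subdivisionVertexJoin G₁ G₂).Adj (Sum.inl u) (Sum.inl v) = False := propext Iff.rfl
lemma adj_le : (subdivisionVertexJoin G₁ G₂).Adj (Sum.inl u) (Sum.inr (Sum.inl e)) = (u ∈ (e : Sym2 V₁)) := propext Iff.rfl
lemma adj_lv : (subdivisionVertexJoin G₁ G₂).Adj (Sum.inl u) (Sum.inr (Sum.inr a)) = False := propext Iff.rfl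
lemma adj_el : (subdivisionVertexJoin G₁ G₂).Adj (Sum.inr (Sum.inl e)) (Sum.inl u) = (u ∈ (e : Sym2 V₁)) := propext Iff.rfl
lemma adj_ee : (subdivisionVertexJoin G₁ G₂).Adj (Sum.inr (Sum.inl e)) (Sum.inr (Sum.inl f)) = False := propext Iff.rfl
lemma adj_ev : (subdivisionVertexJoin G₁ G₂).Adj (Sum.inr (Sum.inl e)) (Sum.inr (Sum.inr a)) = True := propext Iff.rfl
lemma adj_vl : (subdivisionVertexJoin G₁ G₂).Adj (Sum.inr (Sum.inr a)) (Sum.inl u) = False := propext Iff.rfl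
lemma adj_ve : (subdivisionVertexJoin G₁ G₂).Adj (Sum.inr (Sum.inr a)) (Sum.inr (Sum.inl e)) = True := propext Iff.rfl
lemma adj_vv : (subdivisionVertexJoin G₁ G₂).Adj (Sum.inr (Sum.inr a)) (Sum.inr (Sum.inr b)) = G₂.Adj a b := propext Iff.rfl

lemma sadj_ll : (subdivisionGraph G₁).Adj (Sum.inl u) (Sum.inl v) = False := propext Iff.rfl
lemma sadj_le : (subdivisionGraph G₁).Adj (Sum.inl u) (Sum.inr e) = (u ∈ (e : Sym2 V₁)) := propext Iff.rfl
lemma sadj_el : (subdivisionGraph G₁).Adj (Sum.inr e) (Sum.inl u) = (u ∈ (e : Sym2 V₁)) := propext Iff.rfl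
lemma sadj_ee : (subdivisionGraph G₁).Adj (Sum.inr e) (Sum.inr f) = False := propext Iff.rfl

lemma deg_inl_s7 : (subdivisionVertexJoin G₁ G₂).degree (Sum.inl u) = G₁.degree u := by
  rw [SimpleGraph.degree, SimpleGraph.neighborFinset_eq_filter, Finset.card_filter]
  rw [Fintype.sum_sum_type, Fintype.sum_sum_type]
  simp only [adj_ll, adj_le, adj_lv, if_false, Finset.sum_const_zero, add_zero, zero_add]
  rw [← Finset.sum_filter, Finset.sum_const, card_filter_incidence G₁ u, smul_eq_mul, mul_one]

lemma deg_mid : (subdivisionVertexJoin G₁ G₂).degree (Sum.inr (Sum.inl e)) = 2 + Fintype.card V₂ := by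
  rw [SimpleGraph.degree, SimpleGraph.neighborFinset_eq_filter, Finset.card_filter]
  rw [Fintype.sum_sum_type, Fintype.sum_sum_type]
  simp only [adj_el, adj_ee, adj_ev, if_false, if_true, Finset.sum_const_zero, add_zero, zero_add]
  rw [← Finset.sum_filter, Finset.sum_const, card_filter_mem_sym2 G₁ e e.2]
  simp only [Finset.sum_const, smul_eq_mul, mul_one, Finset.card_univ]

lemma deg_v : (subdivisionVertexJoin G₁ G₂).degree (Sum.inr (Sum.inr a))
    = Fintype.card G₁.edgeSet + G₂.degree a := by
  rw [SimpleGraph.degree, SimpleGraph.neighborFinset_eq_filter, Finset.card_filter]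
  rw [Fintype.sum_sum_type, Fintype.sum_sum_type]
  simp only [adj_vl, adj_ve, adj_vv, if_false, if_true, Finset.sum_const_zero, add_zero, zero_add]
  simp only [Finset.sum_const, smul_eq_mul, mul_one, Finset.card_univ]
  congr 1
  rw [SimpleGraph.degree, SimpleGraph.neighborFinset_eq_filter, Finset.card_filter]

lemma sum_sum_ite_incidence_swap (f : V₁ → ℤ) :
    ∑ e : G₁.edgeSet, ∑ u : V₁, (if u ∈ (e : Sym2 V₁) then f u else 0)
      = ∑ u : V₁, (G₁.degree u : ℤ) * f u := by
  rw [Finset.sum_comm]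
  exact Finset.sum_congr rfl fun u _ => sum_ite_incidence G₁ u (f u)

lemma sum_ite_adj (x : V₂) (c : ℤ) :
    ∑ y : V₂, (if G₂.Adj x y then c else 0) = (G₂.degree x : ℤ) * c := by
  rw [← Finset.sum_filter, Finset.sum_const, ← SimpleGraph.neighborFinset_eq_filter,
    nsmul_eq_mul]
  rfl

lemma sum_sum_ite_adj_swap (f : V₂ → ℤ) :
    ∑ x : V₂, ∑ y : V₂, (if G₂.Adj x y then f y else 0)
      = ∑ y : V₂, (G₂.degree y : ℤ) * f y := by
  rw [Finset.sum_comm]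
  refine Finset.sum_congr rfl fun y _ => ?_
  rw [show (∑ x : V₂, if G₂.Adj x y then f y else 0)
      = ∑ x : V₂, if G₂.Adj y x then f y else 0 from
    Finset.sum_congr rfl fun x _ => if_congr (G₂.adj_comm x y) rfl rfl]
  exact sum_ite_adj G₂ y (f y)

end Aux


/-- The reduced second Zagreb index of `G₁ ∔ G₂`.  In the final sum, which ranges over the
edges of `S(G₁)`, each edge joins an original vertex `u ∈ V(G₁)` to a subdivision vertex,
and the summand is the degree in `G₁` of that original endpoint `u`
(subdivision-vertex endpoints contribute `0` via `Sum.elim`). -/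
theorem reducedSecondZagreb_subdivisionVertexJoin {V₁ V₂ : Type*} [Fintype V₁] [Fintype V₂]
    [DecidableEq V₁] [DecidableEq V₂] (G₁ : SimpleGraph V₁) (G₂ : SimpleGraph V₂)
    [DecidableRel G₁.Adj] [DecidableRel G₂.Adj]
    (hG₁ : G₁.Connected) (hG₂ : G₂.Connected)
    (n₁ n₂ m₁ m₂ m₁' : ℕ)
    (hn₁ : Fintype.card V₁ = n₁) (hn₂ : Fintype.card V₂ = n₂)
    (hm₁ : G₁.edgeFinset.card = m₁) (hm₂ : G₂.edgeFinset.card = m₂)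
    (hm₁' : (subdivisionGraph G₁).edgeFinset.card = m₁') (hm₁'2 : m₁' = 2 * m₁) :
    reducedSecondZagreb (subdivisionVertexJoin G₁ G₂)
      = reducedSecondZagreb G₂ + m₁ * (firstZagreb G₂ + (m₁ : ℤ) * m₂ - 2 * m₂)
        - m₁' * ((n₂ : ℤ) + 1)
        + m₁ * ((n₂ : ℤ) + 1) * (2 * (m₂ : ℤ) + (m₁ : ℤ) * n₂ - n₂)
        + ((n₂ : ℤ) + 1) *
            ∑ e ∈ (subdivisionGraph G₁).edgeFinset,
              Sym2.lift
                ⟨fun x y =>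
                  Sum.elim (fun u : V₁ => (G₁.degree u : ℤ)) (fun _ : G₁.edgeSet => 0) x
                  + Sum.elim (fun u : V₁ => (G₁.degree u : ℤ)) (fun _ : G₁.edgeSet => 0) y,
                  fun _ _ => by ring⟩ e := by
  classical
  subst hn₂ hm₁ hm₂ hm₁'
  have hJ0 : 2 * reducedSecondZagreb (subdivisionVertexJoin G₁ G₂)
      = ∑ x, ∑ y ∈ (subdivisionVertexJoin G₁ G₂).neighborFinset x,
          (((subdivisionVertexJoin G₁ G₂).degree x : ℤ) - 1) *
            (((subdivisionVertexJoin G₁ G₂).degree y : ℤ) - 1) :=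
    (double_sum_edge _ _ (fun u v => by ring)).symm
  rw [sum_nbr] at hJ0
  rw [Fintype.sum_sum_type] at hJ0
  simp only [Fintype.sum_sum_type, adj_ll, adj_le, adj_lv, adj_el, adj_ee, adj_ev,
    adj_vl, adj_ve, adj_vv, if_false, if_true, Finset.sum_const_zero, add_zero, zero_add,
    deg_inl_s7, deg_mid, deg_v] at hJ0
  simp only [Finset.sum_add_distrib] at hJ0
  simp only [sum_ite_incidence, sum_sum_ite_incidence_swap, Finset.sum_const,
    Finset.card_univ, nsmul_eq_mul] at hJ0
  have point : ∀ x y : V₂,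
      (if G₂.Adj x y then
          (((Fintype.card G₁.edgeSet + G₂.degree x : ℕ) : ℤ) - 1) *
            (((Fintype.card G₁.edgeSet + G₂.degree y : ℕ) : ℤ) - 1) else 0)
        = (if G₂.Adj x y then (G₂.degree x : ℤ) * (G₂.degree y : ℤ) else 0)
          + (if G₂.Adj x y then ((Fintype.card G₁.edgeSet : ℤ) - 1) * (G₂.degree x : ℤ) else 0)
          + (if G₂.Adj x y then ((Fintype.card G₁.edgeSet : ℤ) - 1) * (G₂.degree y : ℤ) else 0)
          + (if G₂.Adj x y then ((Fintype.card G₁.edgeSet : ℤ) - 1) ^ 2 else 0) := by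
    intro x y
    split
    · push_cast; ring
    · simp
  simp_rw [point] at hJ0
  simp only [Finset.sum_add_distrib] at hJ0
  simp only [sum_sum_ite_adj_swap] at hJ0
  simp only [sum_ite_adj] at hJ0
  simp only [← SimpleGraph.edgeFinset_card] at hJ0
  -- abbreviations (as plain terms)
  have hS1 : (∑ x : V₁, (G₁.degree x : ℤ)) = 2 * (#G₁.edgeFinset : ℤ) := by
    exact_mod_cast congrArg (fun n : ℕ => (n : ℤ)) G₁.sum_degrees_eq_twice_card_edges
  have hZ0 : (∑ x : V₂, (G₂.degree x : ℤ)) = 2 * (#G₂.edgeFinset : ℤ) := by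
    exact_mod_cast congrArg (fun n : ℕ => (n : ℤ)) G₂.sum_degrees_eq_twice_card_edges
  have c1 : (∑ x : V₁, (G₁.degree x : ℤ) *
        (((G₁.degree x : ℤ) - 1) * ((↑(2 + Fintype.card V₂) : ℤ) - 1)))
      = ((Fintype.card V₂ : ℤ) + 1) * (∑ x : V₁, (G₁.degree x : ℤ) ^ 2)
        - ((Fintype.card V₂ : ℤ) + 1) * (∑ x : V₁, (G₁.degree x : ℤ)) := by
    rw [Finset.mul_sum, Finset.mul_sum, ← Finset.sum_sub_distrib]
    exact Finset.sum_congr rfl fun x _ => by push_cast; ring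
  have c2 : (∑ x : V₁, (G₁.degree x : ℤ) *
        (((↑(2 + Fintype.card V₂) : ℤ) - 1) * ((G₁.degree x : ℤ) - 1)))
      = ((Fintype.card V₂ : ℤ) + 1) * (∑ x : V₁, (G₁.degree x : ℤ) ^ 2)
        - ((Fintype.card V₂ : ℤ) + 1) * (∑ x : V₁, (G₁.degree x : ℤ)) := by
    rw [Finset.mul_sum, Finset.mul_sum, ← Finset.sum_sub_distrib]
    exact Finset.sum_congr rfl fun x _ => by push_cast; ring
  have c3 : (∑ x : V₂, ((↑(2 + Fintype.card V₂) : ℤ) - 1) *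
        ((↑(#G₁.edgeFinset + G₂.degree x) : ℤ) - 1))
      = (Fintype.card V₂ : ℤ) * (((Fintype.card V₂ : ℤ) + 1) * ((#G₁.edgeFinset : ℤ) - 1))
        + ((Fintype.card V₂ : ℤ) + 1) * (∑ x : V₂, (G₂.degree x : ℤ)) := by
    rw [show (∑ x : V₂, ((↑(2 + Fintype.card V₂) : ℤ) - 1) *
          ((↑(#G₁.edgeFinset + G₂.degree x) : ℤ) - 1))
        = ∑ x : V₂, (((Fintype.card V₂ : ℤ) + 1) * ((#G₁.edgeFinset : ℤ) - 1)
            + ((Fintype.card V₂ : ℤ) + 1) * (G₂.degree x : ℤ)) from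
      Finset.sum_congr rfl fun x _ => by push_cast; ring]
    rw [Finset.sum_add_distrib, Finset.sum_const, Finset.card_univ, nsmul_eq_mul,
      ← Finset.mul_sum]
  have c4 : (∑ x : V₂, (#G₁.edgeFinset : ℤ) *
        (((↑(#G₁.edgeFinset + G₂.degree x) : ℤ) - 1) * ((↑(2 + Fintype.card V₂) : ℤ) - 1)))
      = (Fintype.card V₂ : ℤ) *
          ((#G₁.edgeFinset : ℤ) * (((Fintype.card V₂ : ℤ) + 1) * ((#G₁.edgeFinset : ℤ) - 1)))
        + (#G₁.edgeFinset : ℤ) * ((Fintype.card V₂ : ℤ) + 1) * (∑ x : V₂, (G₂.degree x : ℤ)) := by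
    rw [show (∑ x : V₂, (#G₁.edgeFinset : ℤ) *
          (((↑(#G₁.edgeFinset + G₂.degree x) : ℤ) - 1) * ((↑(2 + Fintype.card V₂) : ℤ) - 1)))
        = ∑ x : V₂, ((#G₁.edgeFinset : ℤ) * (((Fintype.card V₂ : ℤ) + 1) * ((#G₁.edgeFinset : ℤ) - 1))
            + (#G₁.edgeFinset : ℤ) * ((Fintype.card V₂ : ℤ) + 1) * (G₂.degree x : ℤ)) from
      Finset.sum_congr rfl fun x _ => by push_cast; ring]
    rw [Finset.sum_add_distrib, Finset.sum_const, Finset.card_univ, nsmul_eq_mul,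
      ← Finset.mul_sum]
  have c5 : (∑ x : V₂, (G₂.degree x : ℤ) * (((#G₁.edgeFinset : ℤ) - 1) * (G₂.degree x : ℤ)))
      = ((#G₁.edgeFinset : ℤ) - 1) * (∑ x : V₂, (G₂.degree x : ℤ) ^ 2) := by
    rw [Finset.mul_sum]
    exact Finset.sum_congr rfl fun x _ => by ring
  have c6 : (∑ x : V₂, (G₂.degree x : ℤ) * ((#G₁.edgeFinset : ℤ) - 1) ^ 2)
      = ((#G₁.edgeFinset : ℤ) - 1) ^ 2 * (∑ x : V₂, (G₂.degree x : ℤ)) := by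
    rw [Finset.mul_sum]
    exact Finset.sum_congr rfl fun x _ => by ring
  rw [c1, c2, c3, c4, c5, c6, hS1, hZ0] at hJ0
  -- the reduced second Zagreb index of G₂
  have hG20 : 2 * reducedSecondZagreb G₂
      = ∑ x, ∑ y ∈ G₂.neighborFinset x,
          (((G₂.degree x : ℤ) - 1) * ((G₂.degree y : ℤ) - 1)) :=
    (double_sum_edge _ _ (fun u v => by ring)).symm
  rw [sum_nbr] at hG20
  have point2 : ∀ x y : V₂,
      (if G₂.Adj x y then ((G₂.degree x : ℤ) - 1) * ((G₂.degree y : ℤ) - 1) else 0)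
        = (if G₂.Adj x y then (G₂.degree x : ℤ) * (G₂.degree y : ℤ) else 0)
          - (if G₂.Adj x y then (G₂.degree x : ℤ) else 0)
          - (if G₂.Adj x y then (G₂.degree y : ℤ) else 0)
          + (if G₂.Adj x y then (1 : ℤ) else 0) := by
    intro x y
    split
    · ring
    · simp
  simp_rw [point2] at hG20
  simp only [Finset.sum_add_distrib, Finset.sum_sub_distrib] at hG20
  simp only [sum_sum_ite_adj_swap] at hG20
  simp only [sum_ite_adj] at hG20
  have c7 : (∑ x : V₂, (G₂.degree x : ℤ) * (G₂.degree x : ℤ))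
      = ∑ x : V₂, (G₂.degree x : ℤ) ^ 2 :=
    Finset.sum_congr rfl fun x _ => by ring
  have c8 : (∑ x : V₂, (G₂.degree x : ℤ) * (1 : ℤ)) = ∑ x : V₂, (G₂.degree x : ℤ) :=
    Finset.sum_congr rfl fun x _ => by ring
  rw [c7, c8, hZ0] at hG20
  -- the sum over edges of the subdivision graph
  have hS0 : (∑ x, ∑ y ∈ (subdivisionGraph G₁).neighborFinset x,
        (Sum.elim (fun u : V₁ => (G₁.degree u : ℤ)) (fun _ : G₁.edgeSet => 0) x
          + Sum.elim (fun u : V₁ => (G₁.degree u : ℤ)) (fun _ : G₁.edgeSet => 0) y))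
      = 2 * ∑ e ∈ (subdivisionGraph G₁).edgeFinset,
          Sym2.lift
            ⟨fun x y =>
              Sum.elim (fun u : V₁ => (G₁.degree u : ℤ)) (fun _ : G₁.edgeSet => 0) x
              + Sum.elim (fun u : V₁ => (G₁.degree u : ℤ)) (fun _ : G₁.edgeSet => 0) y,
              fun _ _ => by ring⟩ e :=
    double_sum_edge _ _ _
  rw [sum_nbr] at hS0
  rw [Fintype.sum_sum_type] at hS0
  simp only [Fintype.sum_sum_type, sadj_ll, sadj_le, sadj_el, sadj_ee, if_false,
    Sum.elim_inl, Sum.elim_inr, add_zero, zero_add, Finset.sum_const_zero] at hS0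
  simp only [sum_ite_incidence, sum_sum_ite_incidence_swap] at hS0
  have c9 : (∑ x : V₁, (G₁.degree x : ℤ) * (G₁.degree x : ℤ))
      = ∑ x : V₁, (G₁.degree x : ℤ) ^ 2 :=
    Finset.sum_congr rfl fun x _ => by ring
  rw [c9] at hS0
  -- put everything together
  rw [hm₁'2]
  have hfz : firstZagreb G₂ = ∑ x : V₂, (G₂.degree x : ℤ) ^ 2 := rfl
  rw [hfz]
  refine mul_left_cancel₀ (a := (2 : ℤ)) two_ne_zero ?_
  push_cast
  linear_combination hJ0 - hG20 + ((Fintype.card V₂ : ℤ) + 1) * hS0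
end
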